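/- arXiv:1907.05472 — 2 statements merged into one kernel-verified Lean document; each statement's English description precedes it below -/
import Mathlib

section
/- Let A be a Noetherian ring, I an ideal, and M a nonzero A-module with Supp(M) ⊆ V(I). If x ∈ I acts surjectively on M (i.e., xM = M), then after passing to A' = A/ann(M), the image of x is a non-zerodivisor on A'; in particular dim A ≥ 1. -/
lemma aux_nzd_not_mem_minimal {R : Type*} [CommRing R] {q : Ideal R}
    (hq : q ∈ minimalPrimes R) {x : R} (hx : x ∈ nonZeroDivisors R) : x ∉ q := by
  intro hxq
  haveI : q.IsPrime := hq.1.1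
  set S := Localization q.primeCompl
  have hmem : algebraMap R S x ∈ IsLocalRing.maximalIdeal S :=
    (IsLocalization.AtPrime.to_map_mem_maximal_iff S q x).mpr hxq
  obtain ⟨n, hn⟩ :=
    (absurd hx (notMem_nonZeroDivisors_of_mem_mem_minimalPrimes hxq hq) :
      ∃ n : ℕ, (algebraMap R S x) ^ n = 0)
  rw [← map_pow, IsLocalization.map_eq_zero_iff q.primeCompl] at hn
  obtain ⟨m, hm⟩ := hn
  have : (m : R) = 0 := (pow_mem hx n).2 m hm
  exact m.2 (this ▸ q.zero_mem)

/-- a coregular element for `M` becomes a non-zerodivisor modulo the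
annihilator of `M`; in particular `dim A ≥ 1`. -/
theorem stmt1 {A : Type*} [CommRing A] [IsNoetherianRing A] (I : Ideal A)
    (M : Type*) [AddCommGroup M] [Module A M] [Nontrivial M]
    (hsupp : Module.support A M ⊆ PrimeSpectrum.zeroLocus (I : Set A))
    (x : A) (hx : x ∈ I)
    (hsurj : Function.Surjective (fun m : M => x • m)) :
    (Ideal.Quotient.mk (Module.annihilator A M) x) ∈
        nonZeroDivisors (A ⧸ Module.annihilator A M) ∧
      1 ≤ ringKrullDim A := by
  set J := Module.annihilator A M with hJ
  have hnzd : (Ideal.Quotient.mk J x) ∈ nonZeroDivisors (A ⧸ J) := by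
    rw [mem_nonZeroDivisors_iff_right]
    intro b hb
    obtain ⟨a, rfl⟩ := Ideal.Quotient.mk_surjective b
    rw [← map_mul, Ideal.Quotient.eq_zero_iff_mem] at hb
    rw [Ideal.Quotient.eq_zero_iff_mem]
    rw [Module.mem_annihilator] at hb ⊢
    intro m
    obtain ⟨m', rfl⟩ := hsurj m
    simpa [mul_smul] using hb m'
  refine ⟨hnzd, ?_⟩
  have hne : (Module.support A M).Nonempty := by
    rw [Set.nonempty_iff_ne_empty]
    intro h
    exact not_subsingleton M (Module.support_eq_empty_iff (R := A) (M := M) |>.mp h)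
  obtain ⟨p, hp⟩ := hne
  have hxp : x ∈ p.asIdeal := (PrimeSpectrum.mem_zeroLocus _ _).mp (hsupp hp) hx
  have hJp : J ≤ p.asIdeal := Module.annihilator_le_of_mem_support hp
  set f := Ideal.Quotient.mk J with hf
  have hfs : Function.Surjective f := Ideal.Quotient.mk_surjective
  have hker : RingHom.ker f ≤ p.asIdeal := by rwa [Ideal.mk_ker]
  haveI hp' : (p.asIdeal.map f).IsPrime := Ideal.map_isPrime_of_surjective hfs hker
  obtain ⟨q', hq'min, hq'le⟩ := Ideal.exists_minimalPrimes_le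
    (bot_le : (⊥ : Ideal (A ⧸ J)) ≤ p.asIdeal.map f)
  have hxq' : f x ∉ q' := aux_nzd_not_mem_minimal hq'min hnzd
  haveI : q'.IsPrime := hq'min.1.1
  have hcm : (p.asIdeal.map f).comap f = p.asIdeal := by
    rw [Ideal.comap_map_of_surjective f hfs, ← RingHom.ker_eq_comap_bot, sup_eq_left.mpr hker]
  set Q : PrimeSpectrum A := ⟨q'.comap f, Ideal.comap_isPrime f q'⟩ with hQ
  have hQp : Q < p := by
    rw [← PrimeSpectrum.asIdeal_lt_asIdeal]
    apply lt_of_le_of_ne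
    · calc Q.asIdeal ≤ (p.asIdeal.map f).comap f := Ideal.comap_mono hq'le
        _ = p.asIdeal := hcm
    · intro h
      exact hxq' (by rw [← h] at hxp; exact hxp)
  have hchain : ((RelSeries.singleton (α := PrimeSpectrum A)
      {(a, b) : PrimeSpectrum A × PrimeSpectrum A | a < b} Q).snoc p
      (by simpa using hQp) : LTSeries (PrimeSpectrum A)).length ≤ ringKrullDim A :=
    Order.LTSeries.length_le_krullDim _
  simpa using hchain
end

section
/- Let A = k[x,y,z,w] be a polynomial ring over a field and let M = H^2_{(x,y)}(A) ⊕ H^2_{(z,w)}(A). Then the two socle elements 1/(xy) ∈ H^2_{(x,y)}(A) and 1/(zw) ∈ H^2_{(z,w)}(A) are not both contained in any cyclic A-submodule of M; in particular, M is not quasi-cyclic. -/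
/-- An `A`-module `M` is quasi-cyclic if it is a countable increasing union of
cyclic submodules. -/
def IsQuasiCyclic (A : Type*) [CommRing A] (M : Type*) [AddCommGroup M] [Module A M] :
    Prop :=
  ∃ N : ℕ → Submodule A M, (∀ n, ∃ m : M, N n = Submodule.span A {m}) ∧
    Monotone N ∧ ∀ m : M, ∃ n, m ∈ N n

section CechModel

variable {A : Type*} [CommRing A]

/-- The canonical map `A_u → A_{uv}` of localizations. -/
noncomputable def toAwayMulLeft (u v : A) :
    Localization.Away u →+* Localization.Away (u * v) :=
  Localization.awayLift (algebraMap A _) u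
    (isUnit_of_mul_isUnit_left
      (by rw [← map_mul]; exact IsLocalization.Away.algebraMap_isUnit (S := Localization.Away (u * v)) (x := u * v)))

/-- The canonical map `A_v → A_{uv}` of localizations. -/
noncomputable def toAwayMulRight (u v : A) :
    Localization.Away v →+* Localization.Away (u * v) :=
  Localization.awayLift (algebraMap A _) v
    (isUnit_of_mul_isUnit_right
      (by rw [← map_mul]; exact IsLocalization.Away.algebraMap_isUnit (S := Localization.Away (u * v)) (x := u * v)))

/-- The image of the Čech map `A_u ⊕ A_v → A_{uv}`, as an `A`-submodule. -/
noncomputable def cechSub (u v : A) : Submodule A (Localization.Away (u * v)) :=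
  Submodule.span A (Set.range (toAwayMulLeft u v) ∪ Set.range (toAwayMulRight u v))

/-- The Čech model of the local cohomology module `H²_{(u,v)}(A)`, namely the
cokernel of `A_u ⊕ A_v → A_{uv}`. -/
noncomputable def H2Model (u v : A) : Type _ :=
  Localization.Away (u * v) ⧸ cechSub u v

noncomputable instance (u v : A) : AddCommGroup (H2Model u v) :=
  inferInstanceAs (AddCommGroup (Localization.Away (u * v) ⧸ cechSub u v))

noncomputable instance (u v : A) : Module A (H2Model u v) :=
  inferInstanceAs (Module A (Localization.Away (u * v) ⧸ cechSub u v))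

/-- The class of `1/(uv)` in the Čech model of `H²_{(u,v)}(A)`. -/
noncomputable def socleElt (u v : A) : H2Model u v :=
  Submodule.Quotient.mk (p := cechSub u v)
    (Localization.mk 1 ⟨u * v, Submonoid.mem_powers _⟩)

end CechModel

section
variable {A : Type*} [CommRing A] [IsDomain A]

theorem mk_eq_mk_iff_of_ne {d : A} (hd : d ≠ 0) {a b : A} {s t : Submonoid.powers d} :
    (Localization.mk a s : Localization.Away d) = Localization.mk b t ↔
      (t : A) * a = (s : A) * b := by
  rw [Localization.mk_eq_mk_iff, Localization.r_iff_exists]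
  constructor
  · rintro ⟨⟨c, k, rfl⟩, hc⟩
    exact mul_left_cancel₀ (pow_ne_zero k hd) hc
  · intro h
    exact ⟨1, by simpa using h⟩

theorem toAwayMulLeft_mk (hd : (u : A) * v ≠ 0) (f : A) (n : ℕ) :
    toAwayMulLeft u v (Localization.mk f ⟨u ^ n, n, rfl⟩) =
      Localization.mk (f * v ^ n) (⟨(u * v) ^ n, n, rfl⟩ : Submonoid.powers (u * v)) := by
  have hv : (algebraMap A (Localization.Away (u * v))) u *
      Localization.mk v ⟨u * v, Submonoid.mem_powers _⟩ = 1 := by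
    rw [← Localization.mk_one_eq_algebraMap, Localization.mk_mul, ← Localization.mk_one,
      Localization.mk_eq_mk_iff, Localization.r_iff_exists]
    exact ⟨1, by simp [mul_comm]⟩
  rw [show toAwayMulLeft u v = Localization.awayLift (algebraMap A _) u
      (isUnit_iff_exists_inv.mpr ⟨_, hv⟩) from rfl, Localization.awayLift_mk (hv := hv)]
  rw [Localization.mk_pow, ← Localization.mk_one_eq_algebraMap, Localization.mk_mul,
    mk_eq_mk_iff_of_ne hd]
  push_cast
  ring
end

section
variable {A : Type*} [CommRing A] [IsDomain A] {u v : A}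

theorem away_mk_surj (u : A) (e : Localization.Away u) :
    ∃ f n, e = Localization.mk f (⟨u ^ n, n, rfl⟩ : Submonoid.powers u) := by
  induction e using Localization.induction_on with
  | _ y =>
    obtain ⟨n, hn⟩ := y.2.2
    exact ⟨y.1, n, by congr 1; exact Subtype.ext hn.symm⟩

theorem toAwayMulRight_mk (hd : (u : A) * v ≠ 0) (g : A) (n : ℕ) :
    toAwayMulRight u v (Localization.mk g ⟨v ^ n, n, rfl⟩) =
      Localization.mk (g * u ^ n) (⟨(u * v) ^ n, n, rfl⟩ : Submonoid.powers (u * v)) := by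
  have hv : (algebraMap A (Localization.Away (u * v))) v *
      Localization.mk u ⟨u * v, Submonoid.mem_powers _⟩ = 1 := by
    rw [← Localization.mk_one_eq_algebraMap, Localization.mk_mul, ← Localization.mk_one,
      Localization.mk_eq_mk_iff, Localization.r_iff_exists]
    exact ⟨1, by simp [mul_comm]⟩
  rw [show toAwayMulRight u v = Localization.awayLift (algebraMap A _) v
      (isUnit_iff_exists_inv.mpr ⟨_, hv⟩) from rfl, Localization.awayLift_mk (hv := hv)]
  rw [Localization.mk_pow, ← Localization.mk_one_eq_algebraMap, Localization.mk_mul,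
    mk_eq_mk_iff_of_ne hd]
  push_cast
  ring

theorem mem_cechSub_iff (hd : (u : A) * v ≠ 0) (t : Localization.Away (u * v)) :
    t ∈ cechSub u v ↔ ∃ (n m : ℕ) (f g : A),
      t = Localization.mk (f * v ^ n) (⟨(u * v) ^ n, n, rfl⟩ : Submonoid.powers (u * v)) +
          Localization.mk (g * u ^ m) (⟨(u * v) ^ m, m, rfl⟩ : Submonoid.powers (u * v)) := by
  set L := Localization.Away (u * v)
  have keyL : ∀ c : A, ∀ e : Localization.Away u,
      c • toAwayMulLeft u v e ∈ Set.range (toAwayMulLeft u v) := by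
    intro c e
    obtain ⟨f, n, rfl⟩ := away_mk_surj u e
    refine ⟨Localization.mk (c * f) ⟨u ^ n, n, rfl⟩, ?_⟩
    rw [toAwayMulLeft_mk hd, toAwayMulLeft_mk hd, Localization.smul_mk, smul_eq_mul, mul_assoc]
  have keyR : ∀ c : A, ∀ e : Localization.Away v,
      c • toAwayMulRight u v e ∈ Set.range (toAwayMulRight u v) := by
    intro c e
    obtain ⟨g, n, rfl⟩ := away_mk_surj v e
    refine ⟨Localization.mk (c * g) ⟨v ^ n, n, rfl⟩, ?_⟩
    rw [toAwayMulRight_mk hd, toAwayMulRight_mk hd, Localization.smul_mk, smul_eq_mul, mul_assoc]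
  set P₁ : Submodule A L :=
    { carrier := Set.range (toAwayMulLeft u v)
      add_mem' := by rintro _ _ ⟨a, rfl⟩ ⟨b, rfl⟩; exact ⟨a + b, map_add _ _ _⟩
      zero_mem' := ⟨0, map_zero _⟩
      smul_mem' := by rintro c _ ⟨a, rfl⟩; exact keyL c a } with hP₁
  set P₂ : Submodule A L :=
    { carrier := Set.range (toAwayMulRight u v)
      add_mem' := by rintro _ _ ⟨a, rfl⟩ ⟨b, rfl⟩; exact ⟨a + b, map_add _ _ _⟩
      zero_mem' := ⟨0, map_zero _⟩
      smul_mem' := by rintro c _ ⟨a, rfl⟩; exact keyR c a } with hP₂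
  have hsub : cechSub u v = P₁ ⊔ P₂ := by
    rw [cechSub, Submodule.span_union]
    rw [show Set.range (toAwayMulLeft u v) = (P₁ : Set L) from rfl,
      show Set.range (toAwayMulRight u v) = (P₂ : Set L) from rfl,
      Submodule.span_eq, Submodule.span_eq]
  rw [hsub, Submodule.mem_sup]
  constructor
  · rintro ⟨y, ⟨ey, rfl⟩, z, ⟨ez, rfl⟩, rfl⟩
    obtain ⟨f, n, rfl⟩ := away_mk_surj u ey
    obtain ⟨g, m, rfl⟩ := away_mk_surj v ez
    exact ⟨n, m, f, g, by rw [toAwayMulLeft_mk hd, toAwayMulRight_mk hd]⟩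
  · rintro ⟨n, m, f, g, rfl⟩
    exact ⟨_, ⟨Localization.mk f ⟨u ^ n, n, rfl⟩, (toAwayMulLeft_mk hd f n)⟩,
      _, ⟨Localization.mk g ⟨v ^ m, m, rfl⟩, (toAwayMulRight_mk hd g m)⟩, rfl⟩
end

section
open MvPolynomial
variable {σ R : Type*} [CommSemiring R] [DecidableEq σ]

theorem coeff_X_pow_mul_of_lt {i : σ} {c : ℕ} (p : MvPolynomial σ R) {μ : σ →₀ ℕ}
    (h : μ i < c) : MvPolynomial.coeff μ (X i ^ c * p) = 0 := by
  induction c generalizing μ with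
  | zero => omega
  | succ c ih =>
    rw [pow_succ', mul_assoc, coeff_X_mul' μ i _]
    split
    · next hmem =>
        have h1 : μ i ≠ 0 := Finsupp.mem_support_iff.mp hmem
        have h2 : (μ - Finsupp.single i 1 : σ →₀ ℕ) i = μ i - 1 := by
          simp
        exact ih (by omega)
    · rfl

theorem coeff_X_pow_mul_of_le {i : σ} {c : ℕ} (p : MvPolynomial σ R) {μ : σ →₀ ℕ}
    (h : c ≤ μ i) : MvPolynomial.coeff μ (X i ^ c * p) = MvPolynomial.coeff (μ - Finsupp.single i c) p := by
  induction c generalizing μ with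
  | zero => simp
  | succ c ih =>
    rw [pow_succ', mul_assoc, coeff_X_mul' μ i _]
    have h2 : (μ - Finsupp.single i 1 : σ →₀ ℕ) i = μ i - 1 := by
      simp
    rw [if_pos (Finsupp.mem_support_iff.mpr (by omega))]
    rw [ih (by omega)]
    congr 1
    ext j
    simp [Finsupp.sub_apply, Finsupp.single_apply]
    split <;> omega
end

section
open MvPolynomial
variable {k : Type*} [Field k]

local notation "A4" => MvPolynomial (Fin 4) k

theorem lemA (a : A4)
    (h : a • (Localization.mk 1 ⟨X 2 * X 3, Submonoid.mem_powers _⟩ :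
        Localization.Away ((X 2 : A4) * X 3)) ∈ cechSub (X 2) (X 3)) :
    a ∈ Ideal.span {(X 2 : A4), X 3} := by
  have hd : (X 2 : A4) * X 3 ≠ 0 := mul_ne_zero (X_ne_zero _) (X_ne_zero _)
  rw [Localization.smul_mk, smul_eq_mul, mul_one] at h
  rw [mem_cechSub_iff hd] at h
  obtain ⟨n, m, f, g, hfg⟩ := h
  rw [Localization.add_mk, mk_eq_mk_iff_of_ne hd] at hfg
  push_cast at hfg
  -- hfg : (X2*X3)^n * (X2*X3)^m * a = (X2*X3) * ((X2*X3)^n * (g * X2^m) + (X2*X3)^m * (f * X3^n))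
  have hpoly : X 2 ^ (n + m) * (X 3 ^ (n + m) * a) =
      X 2 ^ (n + m + 1) * (X 3 ^ (n + 1) * g)
        + X 3 ^ (n + m + 1) * (X 2 ^ (m + 1) * f) := by
    linear_combination hfg
  rw [show ({(X 2 : A4), X 3} : Set A4) = MvPolynomial.X '' {2, 3} by
    simp [Set.image_insert_eq], mem_ideal_span_X_image]
  intro μ hμ
  by_contra hcon
  push_neg at hcon
  have h2 : μ 2 = 0 := hcon 2 (by simp)
  have h3 : μ 3 = 0 := hcon 3 (by simp)
  set ν : Fin 4 →₀ ℕ := (μ + Finsupp.single 3 (n + m)) + Finsupp.single 2 (n + m) with hν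
  have hν2 : ν 2 = n + m := by simp [hν, Finsupp.single_apply, h2]
  have hν3 : ν 3 = n + m := by simp [hν, Finsupp.single_apply, h3]
  have := congrArg (MvPolynomial.coeff ν) hpoly
  rw [coeff_add, coeff_X_pow_mul_of_lt (X 3 ^ (n + 1) * g) (show ν 2 < n + m + 1 by omega),
    coeff_X_pow_mul_of_lt (X 2 ^ (m + 1) * f) (show ν 3 < n + m + 1 by omega),
    coeff_X_pow_mul_of_le (X 3 ^ (n + m) * a) (show n + m ≤ ν 2 by omega)] at this
  rw [show ν - Finsupp.single 2 (n + m) = μ + Finsupp.single 3 (n + m) by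
      rw [hν]; exact add_tsub_cancel_right _ _] at this
  rw [coeff_X_pow_mul_of_le a (by simp [Finsupp.single_apply]),
    add_tsub_cancel_right] at this
  simp only [add_zero] at this
  exact Finsupp.mem_support_iff.mp hμ this
end

section
open MvPolynomial
variable {k : Type*} [Field k]

theorem lemB (f g : MvPolynomial (Fin 4) k)
    (q : Localization.Away ((X 0 : MvPolynomial (Fin 4) k) * X 1)) :
    (X 2 * f + X 3 * g) • q -
        (Localization.mk 1 ⟨X 0 * X 1, Submonoid.mem_powers _⟩ :
          Localization.Away ((X 0 : MvPolynomial (Fin 4) k) * X 1)) ∉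
      cechSub (X 0) (X 1) := by
  have hd : (X 0 : MvPolynomial (Fin 4) k) * X 1 ≠ 0 := mul_ne_zero (X_ne_zero _) (X_ne_zero _)
  intro h
  obtain ⟨h₀, N, rfl⟩ := away_mk_surj _ q
  rw [Localization.smul_mk, smul_eq_mul, Localization.sub_mk, mem_cechSub_iff hd] at h
  obtain ⟨n, m, f₁, g₁, hfg⟩ := h
  rw [Localization.add_mk, mk_eq_mk_iff_of_ne hd] at hfg
  push_cast at hfg
  have hpoly : X 2 * (f * (h₀ * (X 0 * X 1) ^ (n + m + 1)))
      + X 3 * (g * (h₀ * (X 0 * X 1) ^ (n + m + 1))) =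
      X 0 ^ (N + n + m) * (X 1 ^ (N + n + m) * 1)
        + X 0 ^ (N + n + m + 1) * (X 1 ^ (N + n + 1) * g₁)
        + X 1 ^ (N + n + m + 1) * (X 0 ^ (N + m + 1) * f₁) := by
    linear_combination hfg
  set ν : Fin 4 →₀ ℕ :=
    ((0 : Fin 4 →₀ ℕ) + Finsupp.single 1 (N + n + m)) + Finsupp.single 0 (N + n + m) with hν
  have hν0 : ν 0 = N + n + m := by simp [hν, Finsupp.single_apply]
  have hν1 : ν 1 = N + n + m := by simp [hν, Finsupp.single_apply]
  have hν2 : ν 2 = 0 := by simp [hν, Finsupp.single_apply]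
  have := congrArg (MvPolynomial.coeff ν) hpoly
  rw [coeff_add, coeff_add, coeff_add,
    coeff_X_mul' ν 2 _, if_neg (by simp [Finsupp.mem_support_iff, hν2]),
    coeff_X_mul' ν 3 _, if_neg (by simp [hν, Finsupp.mem_support_iff, Finsupp.single_apply]),
    coeff_X_pow_mul_of_lt (X 1 ^ (N + n + 1) * g₁) (show ν 0 < N + n + m + 1 by omega),
    coeff_X_pow_mul_of_lt (X 0 ^ (N + m + 1) * f₁) (show ν 1 < N + n + m + 1 by omega),
    coeff_X_pow_mul_of_le (X 1 ^ (N + n + m) * 1) (show N + n + m ≤ ν 0 by omega)] at this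
  rw [show ν - Finsupp.single 0 (N + n + m) = (0 : Fin 4 →₀ ℕ) + Finsupp.single 1 (N + n + m) by
      rw [hν]; exact add_tsub_cancel_right _ _] at this
  rw [coeff_X_pow_mul_of_le 1 (by simp [Finsupp.single_apply]),
    add_tsub_cancel_right] at this
  simp at this
end

open MvPolynomial in
/-- for `A = k[x,y,z,w]` and `M = H²_{(x,y)}(A) ⊕ H²_{(z,w)}(A)`
(realized as Čech cokernels), the socle elements `1/(xy)` and `1/(zw)` do not lie in a
common cyclic submodule; in particular `M` is not quasi-cyclic. -/
theorem stmt18 (k : Type*) [Field k] :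
    (∀ p : H2Model (X (0 : Fin 4) : MvPolynomial (Fin 4) k) (X 1) ×
          H2Model (X (2 : Fin 4) : MvPolynomial (Fin 4) k) (X 3),
        ¬ ((socleElt (X 0) (X 1), 0) ∈ Submodule.span (MvPolynomial (Fin 4) k) {p} ∧
           ((0 : H2Model (X (0 : Fin 4) : MvPolynomial (Fin 4) k) (X 1)), socleElt (X 2) (X 3))
              ∈ Submodule.span (MvPolynomial (Fin 4) k) {p})) ∧
      ¬ IsQuasiCyclic (MvPolynomial (Fin 4) k)
          (H2Model (X (0 : Fin 4) : MvPolynomial (Fin 4) k) (X 1) ×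
            H2Model (X (2 : Fin 4) : MvPolynomial (Fin 4) k) (X 3)) := by
  have main : ∀ p : H2Model (X (0 : Fin 4) : MvPolynomial (Fin 4) k) (X 1) ×
          H2Model (X (2 : Fin 4) : MvPolynomial (Fin 4) k) (X 3),
        ¬ ((socleElt (X 0) (X 1), 0) ∈ Submodule.span (MvPolynomial (Fin 4) k) {p} ∧
           ((0 : H2Model (X (0 : Fin 4) : MvPolynomial (Fin 4) k) (X 1)), socleElt (X 2) (X 3))
              ∈ Submodule.span (MvPolynomial (Fin 4) k) {p}) := by
    rintro p ⟨h1, h2⟩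
    rw [Submodule.mem_span_singleton] at h1 h2
    obtain ⟨a, ha⟩ := h1
    obtain ⟨b, hb⟩ := h2
    have ha1 : a • p.1 = socleElt (X 0) (X 1) := congrArg Prod.fst ha
    have ha2 : a • p.2 = 0 := congrArg Prod.snd ha
    have hb2 : b • p.2 = socleElt (X 2) (X 3) := congrArg Prod.snd hb
    have key : a • socleElt (X (2 : Fin 4) : MvPolynomial (Fin 4) k) (X 3) = 0 := by
      rw [← hb2, smul_comm, ha2, smul_zero]
    have hmem : a • (Localization.mk 1 ⟨X 2 * X 3, Submonoid.mem_powers _⟩ :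
        Localization.Away ((X 2 : MvPolynomial (Fin 4) k) * X 3)) ∈ cechSub (X 2) (X 3) := by
      rw [← Submodule.Quotient.mk_eq_zero, Submodule.Quotient.mk_smul]
      exact key
    obtain ⟨u, v, huv⟩ := Ideal.mem_span_pair.mp (lemA a hmem)
    obtain ⟨q, hq⟩ := Submodule.Quotient.mk_surjective _ p.1
    have hfin : (X 2 * u + X 3 * v) • q -
        (Localization.mk 1 ⟨X 0 * X 1, Submonoid.mem_powers _⟩ :
          Localization.Away ((X 0 : MvPolynomial (Fin 4) k) * X 1)) ∈ cechSub (X 0) (X 1) := by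
      rw [← Submodule.Quotient.eq]
      rw [Submodule.Quotient.mk_smul, hq]
      rw [show X 2 * u + X 3 * v = a by linear_combination huv]
      exact ha1
    exact lemB u v q hfin
  refine ⟨main, ?_⟩
  rintro ⟨N, hcyc, hmono, hcov⟩
  obtain ⟨n₁, hn₁⟩ := hcov (socleElt (X 0) (X 1), 0)
  obtain ⟨n₂, hn₂⟩ := hcov (0, socleElt (X 2) (X 3))
  obtain ⟨p, hp⟩ := hcyc (max n₁ n₂)
  exact main p ⟨hp ▸ hmono (le_max_left n₁ n₂) hn₁, hp ▸ hmono (le_max_right n₁ n₂) hn₂⟩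
end
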